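/- The Medvedev degree of DNR_2 is closed, meet-irreducible, and uncountable, yet it is not a degree of enumerability; in fact, it does not bound any nonzero degree of enumerability: if A ⊆ ω is nonempty and E_A ≤_s DNR_2, then E_A has a recursive member. -/

import Mathlib

/-!  Common definitions: mass problems in Baire space, Medvedev reducibility,
enumeration reducibility, trees, and related notions. -/

/-- A Turing functional, given by a monotone partial recursive map taking a
finite initial segment of the oracle and an input to an output value. -/
structure TuringFunctional where
  app : List ℕ × ℕ →. ℕ
  partrec : Partrec app
  mono : ∀ {σ τ : List ℕ} {n y : ℕ}, σ <+: τ → y ∈ app (σ, n) → y ∈ app (τ, n)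

/-- `Φ.Total g f` means that `Φ(g)` is total and equals `f`. -/
def TuringFunctional.Total (Φ : TuringFunctional) (g f : ℕ → ℕ) : Prop :=
  ∀ n, ∃ k, f n ∈ Φ.app ((List.range k).map g, n)

/-- Medvedev reducibility `A ≤ₛ B` between mass problems. -/
def MedvedevLE (A B : Set (ℕ → ℕ)) : Prop :=
  ∃ Φ : TuringFunctional, ∀ g ∈ B, ∃ f, Φ.Total g f ∧ f ∈ A

/-- Medvedev equivalence. -/
def MedvedevEquiv (A B : Set (ℕ → ℕ)) : Prop := MedvedevLE A B ∧ MedvedevLE B A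

/-- The problem of enumerability of `A`: all functions with range `A`. -/
def EProb (A : Set ℕ) : Set (ℕ → ℕ) := {f | Set.range f = A}

/-- The graph of `f`, coded as a set of naturals via the pairing function. -/
def graphSet (f : ℕ → ℕ) : Set ℕ := Set.range fun n => Nat.pair n (f n)

/-- The `e`-th enumeration operator applied to a set `B`:
`x` is enumerated iff for some (code `u` of a) finite list contained in `B`,
the `e`-th partial recursive function halts on `⟨x, u⟩`. -/
def enumOpApply (e : ℕ) (B : Set ℕ) : Set ℕ :=
  {x | ∃ u : ℕ, ((Denumerable.ofNat Nat.Partrec.Code e).eval (Nat.pair x u)).Dom ∧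
        ∀ y ∈ Denumerable.ofNat (List ℕ) u, y ∈ B}

/-- Enumeration reducibility between subsets of `ℕ`. -/
def EnumLE (A B : Set ℕ) : Prop := ∃ e : ℕ, enumOpApply e B = A

/-- Enumeration equivalence. -/
def EnumEquiv (A B : Set ℕ) : Prop := EnumLE A B ∧ EnumLE B A

/-- `A` is recursively enumerable: it is the domain of a partial recursive function. -/
def REset (A : Set ℕ) : Prop := ∃ c : Nat.Partrec.Code, A = {x | (c.eval x).Dom}

/-- `A` is quasiminimal: not r.e., and every total function whose graph
enumeration-reduces to `A` is recursive. -/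
def Quasiminimal (A : Set ℕ) : Prop :=
  ¬ REset A ∧ ∀ f : ℕ → ℕ, EnumLE (graphSet f) A → Computable f

/-- `A` (as a set) has cototal enumeration degree. -/
def CototalDeg (A : Set ℕ) : Prop := ∃ B : Set ℕ, EnumEquiv B A ∧ EnumLE B Bᶜ

/-- The set `K_A = {⟨e,x⟩ : x ∈ Ψ_e(A)}`. -/
def Kset (A : Set ℕ) : Set ℕ := {p | p.unpair.2 ∈ enumOpApply p.unpair.1 A}

/-- The skip of `A`. -/
def skipSet (A : Set ℕ) : Set ℕ := (Kset A)ᶜ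

/-- The recursive join of two subsets of `ℕ`. -/
def joinSet (A B : Set ℕ) : Set ℕ :=
  {n | (n % 2 = 0 ∧ n / 2 ∈ A) ∨ (n % 2 = 1 ∧ n / 2 ∈ B)}

/-- `A` is recursively enumerable in (the characteristic function of) `X`,
i.e. `A ≤ₑ X ⊕ Xᶜ`. -/
def REin (A X : Set ℕ) : Prop := EnumLE A (joinSet X Xᶜ)

/-- Trees: subsets of `ω^{<ω}` closed under initial segments. -/
def IsTree (T : Set (List ℕ)) : Prop := ∀ ⦃σ τ : List ℕ⦄, σ <+: τ → τ ∈ T → σ ∈ T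

/-- A leaf of `T`: a node with no proper extension in `T`. -/
def IsLeaf (T : Set (List ℕ)) (σ : List ℕ) : Prop :=
  σ ∈ T ∧ ∀ τ ∈ T, σ <+: τ → τ = σ

/-- `T` has no leaves. -/
def NoLeaves (T : Set (List ℕ)) : Prop := ∀ σ ∈ T, ¬ IsLeaf T σ

/-- `T` is finitely branching. -/
def FinBranching (T : Set (List ℕ)) : Prop := ∀ σ ∈ T, {n : ℕ | σ ++ [n] ∈ T}.Finite

/-- `[T]`: the set of infinite paths through `T`. -/
def Paths (T : Set (List ℕ)) : Set (ℕ → ℕ) := {f | ∀ n, (List.range n).map f ∈ T}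

/-- A tree coded as a subset of `ℕ`. -/
def codeTree (T : Set (List ℕ)) : Set ℕ := Encodable.encode '' T

/-- `T` is `h`-bounded. -/
def BoundedTree (h : ℕ → ℕ) (T : Set (List ℕ)) : Prop :=
  ∀ σ ∈ T, ∀ i : ℕ, ∀ hi : i < σ.length, σ.get ⟨i, hi⟩ < h i

/-- A uniformly e-pointed tree with respect to functions. -/
def UEPfun (T : Set (List ℕ)) : Prop :=
  IsTree T ∧ FinBranching T ∧ NoLeaves T ∧
    ∃ e : ℕ, ∀ g ∈ Paths T, enumOpApply e (graphSet g) = codeTree T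

/-- A uniformly e-pointed tree with respect to sets (a subtree of `2^{<ω}`). -/
def UEPset (T : Set (List ℕ)) : Prop :=
  IsTree T ∧ (∀ σ ∈ T, ∀ i ∈ σ, i ≤ 1) ∧ NoLeaves T ∧
    ∃ e : ℕ, ∀ g ∈ Paths T, enumOpApply e {n | g n = 1} = codeTree T

/-- Prepend `i` to a function. -/
def consFun (i : ℕ) (f : ℕ → ℕ) : ℕ → ℕ := fun n => Nat.casesOn n i fun m => f m

/-- The mass problem `0⌢A ∪ 1⌢B`, representing the meet of the degrees of `A` and `B`. -/
def meetProb (A B : Set (ℕ → ℕ)) : Set (ℕ → ℕ) := consFun 0 '' A ∪ consFun 1 '' B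

/-- A mass problem has meet-irreducible Medvedev degree: its degree is not the
meet of two strictly larger degrees. -/
def MeetIrred (X : Set (ℕ → ℕ)) : Prop :=
  ¬ ∃ B C : Set (ℕ → ℕ), MedvedevEquiv (meetProb B C) X ∧
      (MedvedevLE X B ∧ ¬ MedvedevLE B X) ∧ (MedvedevLE X C ∧ ¬ MedvedevLE C X)

/-- `σ` is an initial segment of `f`. -/
def strPrefix (σ : List ℕ) (f : ℕ → ℕ) : Prop := (List.range σ.length).map f = σ

/-- A uniform mass problem. -/
def UniformProb (A : Set (ℕ → ℕ)) : Prop :=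
  ∀ σ : List ℕ, (∃ f ∈ A, strPrefix σ f) → MedvedevLE {f | f ∈ A ∧ strPrefix σ f} A

/-- The `{0,1}`-valued diagonally nonrecursive functions. -/
def DNR2 : Set (ℕ → ℕ) :=
  {f | (∀ n, f n ≤ 1) ∧
    ∀ e y : ℕ, y ∈ (Denumerable.ofNat Nat.Partrec.Code e).eval e → f e ≠ y}

/-- `C_A`: injective enumerations of subsets of `A`. -/
def CProb (A : Set ℕ) : Set (ℕ → ℕ) :=
  {f | Function.Injective f ∧ Set.range f ⊆ A}

namespace S5
open Nat.Partrec (Code)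
open Nat.Partrec.Code

/-- oracle prefix -/
def pre (g : ℕ → ℕ) (k : ℕ) : List ℕ := (List.range k).map g

@[simp] lemma pre_length (g k) : (pre g k).length = k := by simp [pre]

lemma pre_getD {g : ℕ → ℕ} {i k : ℕ} (h : i < k) : (pre g k).getD i 0 = g i := by
  simp [pre, List.getD_eq_getElem?_getD, h]

lemma take_pre (g : ℕ → ℕ) {k k' : ℕ} (h : k ≤ k') : (pre g k').take k = pre g k := by
  rw [pre, pre, ← List.map_take, List.take_range, Nat.min_eq_left h]

lemma pre_prefix (g : ℕ → ℕ) {k k' : ℕ} (h : k ≤ k') : pre g k <+: pre g k' := by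
  rw [← take_pre g h]; exact List.take_prefix _ _

lemma val_unique (Φ : TuringFunctional) {g : ℕ → ℕ} {k k' n y y' : ℕ}
    (h : y ∈ Φ.app (pre g k, n)) (h' : y' ∈ Φ.app (pre g k', n)) : y = y' := by
  rcases le_total k k' with hk | hk
  · exact Part.mem_unique (Φ.mono (pre_prefix g hk) h) h'
  · exact Part.mem_unique h (Φ.mono (pre_prefix g hk) h')

/-- canonical DNR2 function -/
noncomputable def dnr : ℕ → ℕ := fun e =>
  match @Part.toOption _ ((Denumerable.ofNat Nat.Partrec.Code e).eval e) (Classical.dec _) with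
  | some y => if y = 0 then 1 else 0
  | none => 0

lemma dnr_le (e : ℕ) : dnr e ≤ 1 := by
  unfold dnr
  rcases h : @Part.toOption _ ((Denumerable.ofNat Nat.Partrec.Code e).eval e) (Classical.dec _) with _ | y
  · simp [h]
  · simp only [h]; split_ifs <;> simp

lemma dnr_mem : dnr ∈ DNR2 := by
  refine ⟨dnr_le, fun e y hy => ?_⟩
  have hs : @Part.toOption _ ((Denumerable.ofNat Nat.Partrec.Code e).eval e) (Classical.dec _) = some y := by
    exact (@Part.toOption_eq_some_iff _ _ (Classical.dec _) _).mpr hy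
  unfold dnr
  rw [hs]
  dsimp only
  split_ifs with h
  · subst h; omega
  · omega


lemma getD_append_left {σ t : List ℕ} {i : ℕ} (hi : i < σ.length) :
    (σ ++ t).getD i 0 = σ.getD i 0 := by
  simp [List.getD_eq_getElem?_getD, List.getElem?_append, hi]

lemma getD_mem {σ : List ℕ} {n : ℕ} (h : n < σ.length) : σ.getD n 0 ∈ σ := by
  have : σ.getD n 0 = σ[n] := by simp [List.getD_eq_getElem?_getD, List.getElem?_eq_getElem h]
  rw [this]
  exact List.getElem_mem h
def Consistent (σ : List ℕ) : Prop :=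
  (∀ x ∈ σ, x ≤ 1) ∧
    ∀ i, i < σ.length → ∀ y ∈ (Denumerable.ofNat Nat.Partrec.Code i).eval i, σ.getD i 0 ≠ y

lemma consistent_pre {g : ℕ → ℕ} (hg : g ∈ DNR2) (k : ℕ) : Consistent (pre g k) := by
  constructor
  · intro x hx
    rcases List.mem_map.1 hx with ⟨i, _, rfl⟩
    exact hg.1 i
  · intro i hi y hy
    rw [pre_getD (by simpa using hi)]
    exact hg.2 i y hy

lemma consistent_of_prefix {σ τ : List ℕ} (h : σ <+: τ) (hτ : Consistent τ) : Consistent σ := by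
  obtain ⟨t, rfl⟩ := h
  constructor
  · exact fun x hx => hτ.1 x (List.mem_append_left _ hx)
  · intro i hi y hy
    have := hτ.2 i (by simp; omega) y hy
    rwa [getD_append_left hi] at this

def patch (σ : List ℕ) (g : ℕ → ℕ) : ℕ → ℕ := fun n => if n < σ.length then σ.getD n 0 else g n

lemma patch_mem {σ : List ℕ} (hσ : Consistent σ) {g : ℕ → ℕ} (hg : g ∈ DNR2) :
    patch σ g ∈ DNR2 := by
  constructor
  · intro n
    unfold patch
    split_ifs with h
    · exact hσ.1 _ (getD_mem h)
    · exact hg.1 n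
  · intro e y hy
    unfold patch
    split_ifs with h
    · exact hσ.2 e h y hy
    · exact hg.2 e y hy

lemma pre_patch {σ : List ℕ} {g : ℕ → ℕ} {k : ℕ} (h : σ.length ≤ k) :
    pre (patch σ g) k = σ ++ (pre g k).drop σ.length := by
  apply List.ext_getElem
  · simp [pre]; omega
  · intro i h1 h2
    simp only [pre, List.getElem_map, List.getElem_range] at h1 ⊢
    by_cases hi : i < σ.length
    · rw [List.getElem_append_left hi]
      simp [patch, hi, List.getD_eq_getElem?_getD, List.getElem?_eq_getElem hi]
    · rw [List.getElem_append_right (by omega)]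
      simp only [List.getElem_drop, pre, List.getElem_map, List.getElem_range]
      simp [patch, hi]
      congr 1
      omega

/-- drop a fixed number is primrec -/
lemma primrec_drop (d : ℕ) : Primrec (fun l : List ℕ => l.drop d) := by
  induction d with
  | zero => exact Primrec.id.of_eq fun l => (List.drop_zero (l := l)).symm
  | succ d ih => exact (Primrec.list_tail.comp ih).of_eq fun l => List.tail_drop (l := l) (i := d)

def _root_.TuringFunctional.patchShift (Φ : TuringFunctional) (σ : List ℕ) {r : ℕ → ℕ}
    (hr : Computable r) : TuringFunctional where
  app := fun p => Φ.app (σ ++ p.1.drop σ.length, r p.2)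
  partrec := Φ.partrec.comp
    (Computable.pair
      ((Primrec.list_append.comp (Primrec.const σ)
        ((primrec_drop σ.length).comp Primrec.fst)).to_comp)
      (hr.comp Computable.snd))
  mono := by
    intro σ' τ' n y h hy
    apply Φ.mono _ hy
    obtain ⟨u, hu⟩ := h.drop σ.length
    exact ⟨u, by rw [List.append_assoc, hu]⟩

lemma patchShift_total {Φ : TuringFunctional} (σ : List ℕ) {r : ℕ → ℕ} (hr : Computable r)
    {g f : ℕ → ℕ} (hT : Φ.Total (patch σ g) f) :
    (Φ.patchShift σ hr).Total g (fun n => f (r n)) := by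
  intro n
  obtain ⟨k, hk⟩ := hT (r n)
  refine ⟨max k σ.length, ?_⟩
  have h1 : f (r n) ∈ Φ.app (pre (patch σ g) (max k σ.length), r n) :=
    Φ.mono (pre_prefix _ (le_max_left _ _)) hk
  rw [pre_patch (le_max_right _ _)] at h1
  exact h1

def Cyl (g : ℕ → ℕ) (k : ℕ) : Set (ℕ → ℕ) := {h | ∀ j < k, h j = g j}

lemma isOpen_cyl (g : ℕ → ℕ) (k : ℕ) : IsOpen (Cyl g k) := by
  have : Cyl g k = ⋂ j ∈ Finset.range k, (fun h : ℕ → ℕ => h j) ⁻¹' {g j} := by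
    ext h; simp [Cyl]
  rw [this]
  exact isOpen_biInter_finset fun j _ => (isOpen_discrete _).preimage (continuous_apply j)

lemma pre_eq_of_cyl {g h : ℕ → ℕ} {k : ℕ} (hc : h ∈ Cyl g k) : pre h k = pre g k := by
  apply List.ext_getElem <;> simp [pre]
  intro i hi; exact hc i hi

lemma patch_mem_cyl {σ : List ℕ} {g x : ℕ → ℕ} {k : ℕ} (hσ : σ = pre x k) :
    patch σ g ∈ Cyl x k := by
  intro j hj
  simp only [patch, hσ, pre_length, hj, if_pos, pre_getD hj]

lemma isClosed_DNR2 : IsClosed DNR2 := by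
  have : DNR2 = ⋂ e : ℕ, (fun f : ℕ → ℕ => f e) ⁻¹'
      {m | m ≤ 1 ∧ ∀ y ∈ (Denumerable.ofNat Nat.Partrec.Code e).eval e, m ≠ y} := by
    ext f
    simp only [Set.mem_iInter, Set.mem_preimage, Set.mem_setOf_eq, DNR2]
    constructor
    · exact fun ⟨h1, h2⟩ e => ⟨h1 e, fun y hy => h2 e y hy⟩
    · exact fun h => ⟨fun e => (h e).1, fun e y hy => (h e).2 y hy⟩
  rw [this]
  exact isClosed_iInter fun e => (isClosed_discrete _).preimage (continuous_apply e)

lemma isCompact_K : IsCompact {f : ℕ → ℕ | ∀ n, f n ≤ 1} := by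
  have : {f : ℕ → ℕ | ∀ n, f n ≤ 1} = Set.pi Set.univ (fun _ : ℕ => Set.Iic 1) := by
    ext f
    simp only [Set.mem_setOf_eq, Set.mem_univ_pi, Set.mem_Iic]
  rw [this]
  exact isCompact_univ_pi fun i => (Set.finite_Iic 1).isCompact

lemma isCompact_DNR2 : IsCompact DNR2 :=
  isCompact_K.of_isClosed_subset isClosed_DNR2 fun f hf => hf.1

def _root_.idTF : TuringFunctional where
  app := fun p => Part.ofOption (p.1[p.2]?)
  partrec := Computable.ofOption ((Primrec.list_getElem?.comp Primrec.fst Primrec.snd).to_comp)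
  mono := by
    intro σ τ n y h hy
    rw [Part.mem_ofOption] at hy ⊢
    obtain ⟨t, rfl⟩ := h
    have hn : n < σ.length := List.getElem?_eq_some_iff.1 hy |>.1
    rwa [List.getElem?_append_left hn]

lemma idTF_total (g : ℕ → ℕ) : idTF.Total g g := by
  intro n
  refine ⟨n + 1, ?_⟩
  show g n ∈ Part.ofOption ((pre g (n+1))[n]?)
  rw [Part.mem_ofOption, pre, List.getElem?_map, List.getElem?_range (Nat.lt_succ_self n)]
  rfl

lemma medvedevLE_refl (A : Set (ℕ → ℕ)) : MedvedevLE A A :=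
  ⟨idTF, fun g hg => ⟨g, idTF_total g, hg⟩⟩

lemma no_computable_DNR2 {d : ℕ → ℕ} (hd : Computable d) (hmem : d ∈ DNR2) : False := by
  have h1 : Nat.Partrec (fun n => Part.some (d n)) := Partrec.nat_iff.1 hd
  obtain ⟨c, hc⟩ := Nat.Partrec.Code.exists_code.1 h1
  have he : (Denumerable.ofNat Nat.Partrec.Code (Encodable.encode c)) = c :=
    Denumerable.ofNat_encode c
  have : d (Encodable.encode c) ∈ (Denumerable.ofNat Nat.Partrec.Code (Encodable.encode c)).eval
      (Encodable.encode c) := by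
    rw [he, hc]; exact Part.mem_some _
  exact hmem.2 _ _ this rfl

lemma computable_pre {f : ℕ → ℕ} (hf : Computable f) : Computable (pre f) := by
  have h := Computable.nat_rec Computable.id (Computable.const ([] : List ℕ))
    (Computable.list_concat.comp (Computable.snd.comp Computable.snd)
      (hf.comp (Computable.fst.comp Computable.snd))).to₂
  refine h.of_eq fun k => ?_
  induction k with
  | zero => rfl
  | succ k ih =>
    have hstep : (Nat.rec ([] : List ℕ) (fun y IH => IH ++ [f y]) (id (k+1)) : List ℕ)
        = (Nat.rec ([] : List ℕ) (fun y IH => IH ++ [f y]) (id k) : List ℕ) ++ [f k] := rfl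
    rw [hstep, ih, pre, pre, List.range_succ, List.map_append]
    rfl

/-- If the oracle is computable and `Φ` is total on it, the output is computable. -/
lemma computable_of_total {Φ : TuringFunctional} {f h : ℕ → ℕ} (hf : Computable f)
    (hT : Φ.Total f h) : Computable h := by
  have hq : Computable (fun m : ℕ => (pre f m.unpair.2, m.unpair.1)) :=
    Computable.pair ((computable_pre hf).comp (Computable.snd.comp Computable.unpair))
      (Computable.fst.comp Computable.unpair)
  have hP : Partrec (fun m : ℕ => Φ.app (pre f m.unpair.2, m.unpair.1)) := Φ.partrec.comp hq
  obtain ⟨c, hc⟩ := Nat.Partrec.Code.exists_code.1 (Partrec.nat_iff.1 hP)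
  set opt : ℕ → ℕ → Option ℕ :=
    fun n j => Nat.Partrec.Code.evaln j.unpair.1 c (Nat.pair n j.unpair.2) with hopt
  have hoptc : Computable₂ opt := by
    have := Nat.Partrec.Code.primrec_evaln
    exact (this.comp (Primrec.pair
      (Primrec.pair (Primrec.fst.comp (Primrec.unpair.comp Primrec.snd)) (Primrec.const c))
      (Primrec₂.natPair.comp Primrec.fst
        (Primrec.snd.comp (Primrec.unpair.comp Primrec.snd))))).to_comp.to₂
  have key : ∀ n, Nat.rfindOpt (opt n) = Part.some (h n) := by
    intro n
    have hdom : (Nat.rfindOpt (opt n)).Dom := by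
      obtain ⟨k, hk⟩ := hT n
      have : h n ∈ Φ.app (pre f k, n) := hk
      have hc2 : h n ∈ c.eval (Nat.pair n k) := by
        rw [hc]; simpa [Nat.unpair_pair] using this
      obtain ⟨t, ht⟩ := Nat.Partrec.Code.evaln_complete.1 hc2
      exact Nat.rfindOpt_dom.2 ⟨Nat.pair t k, h n, by simpa [hopt, Nat.unpair_pair] using ht⟩
    apply Part.eq_some_iff.2
    obtain ⟨a, ha⟩ := Part.dom_iff_mem.1 hdom
    obtain ⟨j, hj⟩ := Nat.rfindOpt_spec ha
    have ha2 : a ∈ Φ.app (pre f j.unpair.2, n) := by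
      have := Nat.Partrec.Code.evaln_sound hj
      rw [hc] at this
      simpa [Nat.unpair_pair] using this
    obtain ⟨k, hk⟩ := hT n
    have : a = h n := val_unique Φ ha2 hk
    rwa [this] at ha
  have hPr : Partrec (fun n => Nat.rfindOpt (opt n)) := Partrec.rfindOpt hoptc
  show Partrec _
  exact hPr.of_eq fun n => by rw [key n]; rfl

/-! ### binary strings of a given length -/

def allBin : ℕ → List (List ℕ)
  | 0 => [[]]
  | l + 1 => (allBin l).flatMap fun σ => [σ ++ [0], σ ++ [1]]

lemma mem_allBin {l : ℕ} {σ : List ℕ} :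
    σ ∈ allBin l ↔ σ.length = l ∧ ∀ x ∈ σ, x ≤ 1 := by
  induction l generalizing σ with
  | zero =>
    simp only [allBin, List.mem_singleton]
    constructor
    · rintro rfl; simp
    · rintro ⟨h, -⟩; exact List.eq_nil_of_length_eq_zero h
  | succ l ih =>
    simp only [allBin, List.mem_flatMap]
    constructor
    · rintro ⟨τ, hτ, hσ⟩
      obtain ⟨h1, h2⟩ := ih.1 hτ
      rw [List.mem_cons, List.mem_singleton] at hσ
      rcases hσ with h | h
      · subst h
        refine ⟨by simp [h1], fun x hx => ?_⟩
        rcases List.mem_append.1 hx with hx | hx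
        · exact h2 x hx
        · simp at hx; omega
      · subst h
        refine ⟨by simp [h1], fun x hx => ?_⟩
        rcases List.mem_append.1 hx with hx | hx
        · exact h2 x hx
        · simp at hx; omega
    · rintro ⟨h1, h2⟩
      have hne : σ ≠ [] := by intro h; subst h; simp at h1
      refine ⟨σ.dropLast, ih.2 ⟨by simp [h1], fun x hx =>
        h2 x (List.dropLast_sublist σ |>.mem hx)⟩, ?_⟩
      have hb : σ.getLast hne ≤ 1 := h2 _ (List.getLast_mem hne)
      have heq : σ.dropLast ++ [σ.getLast hne] = σ := List.dropLast_append_getLast hne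
      rcases Nat.le_one_iff_eq_zero_or_eq_one.1 hb with hb0 | hb0 <;>
        rw [← heq, hb0] <;> simp

lemma primrec_allBin : Primrec allBin := by
  have hg : Primrec₂ (fun (_ : List (List ℕ)) (σ : List ℕ) => [σ ++ [0], σ ++ [1]]) :=
    Primrec.to₂ (Primrec.list_cons.comp
      (Primrec.list_concat.comp Primrec.snd (Primrec.const 0))
      (Primrec.list_cons.comp
        (Primrec.list_concat.comp Primrec.snd (Primrec.const 1))
        (Primrec.const [])))
  have hstep0 : Primrec (fun L : List (List ℕ) => L.flatMap fun σ => [σ ++ [0], σ ++ [1]]) :=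
    Primrec.list_flatMap Primrec.id hg
  have hstep : Primrec₂ (fun (_ : ℕ) (p : ℕ × List (List ℕ)) =>
      p.2.flatMap fun σ => [σ ++ [0], σ ++ [1]]) :=
    Primrec.to₂ (hstep0.comp (Primrec.snd.comp Primrec.snd))
  have h := Primrec.nat_rec' Primrec.id (Primrec.const ([[]] : List (List ℕ))) hstep
  refine h.of_eq fun l => ?_
  induction l with
  | zero => rfl
  | succ l ihl =>
    simp only [id_eq] at ihl ⊢
    show (Nat.rec [[]] (fun _ IH => IH.flatMap fun σ => [σ ++ [0], σ ++ [1]]) l :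
        List (List ℕ)).flatMap (fun σ => [σ ++ [0], σ ++ [1]]) = allBin (l+1)
    rw [ihl, allBin]

lemma primrec_all {α β : Type*} [Primcodable α] [Primcodable β] {f : α → List β}
    {p : α → β → Bool} (hf : Primrec f) (hp : Primrec₂ p) :
    Primrec fun a => (f a).all (p a) := by
  have h := Primrec.list_foldr hf (Primrec.const true)
    (((Primrec.dom_bool₂ (· && ·)).comp
      (hp.comp Primrec.fst (Primrec.fst.comp Primrec.snd)) (Primrec.snd.comp Primrec.snd)).to₂)
  refine h.of_eq fun a => ?_
  induction f a with
  | nil => rfl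
  | cons b t iht => simp [iht]

lemma primrec_any {α β : Type*} [Primcodable α] [Primcodable β] {f : α → List β}
    {p : α → β → Bool} (hf : Primrec f) (hp : Primrec₂ p) :
    Primrec fun a => (f a).any (p a) := by
  have h := Primrec.list_foldr hf (Primrec.const false)
    (((Primrec.dom_bool₂ (· || ·)).comp
      (hp.comp Primrec.fst (Primrec.fst.comp Primrec.snd)) (Primrec.snd.comp Primrec.snd)).to₂)
  refine h.of_eq fun a => ?_
  induction f a with
  | nil => rfl
  | cons b t iht => simp [iht]

/-! ### stage-bounded consistency -/

def stageCons (s : ℕ) (σ : List ℕ) : Bool :=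
  (List.range σ.length).all fun i =>
    !(decide (Nat.Partrec.Code.evaln s (Denumerable.ofNat Nat.Partrec.Code i) i
        = some (σ.getD i 0)))

lemma primrec_stageCons : Primrec₂ stageCons := by
  have heval : Primrec (fun q : (ℕ × List ℕ) × ℕ =>
      Nat.Partrec.Code.evaln q.1.1 (Denumerable.ofNat Nat.Partrec.Code q.2) q.2) :=
    Nat.Partrec.Code.primrec_evaln.comp
      (Primrec.pair (Primrec.pair (Primrec.fst.comp Primrec.fst)
        ((Primrec.ofNat _).comp Primrec.snd)) Primrec.snd)
  have hsome : Primrec (fun q : (ℕ × List ℕ) × ℕ =>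
      (some (q.1.2.getD q.2 0) : Option ℕ)) :=
    Primrec.option_some.comp
      ((Primrec.list_getD 0).comp (Primrec.snd.comp Primrec.fst) Primrec.snd)
  have hp : Primrec (fun q : (ℕ × List ℕ) × ℕ =>
      !(decide (Nat.Partrec.Code.evaln q.1.1 (Denumerable.ofNat Nat.Partrec.Code q.2) q.2
        = some (q.1.2.getD q.2 0)))) :=
    Primrec.not.comp (PrimrecPred.decide (Primrec.eq.comp heval hsome))
  have hmain := primrec_all (α := ℕ × List ℕ)
    (f := fun p => List.range p.2.length)
    (p := fun p i => !(decide (Nat.Partrec.Code.evaln p.1 (Denumerable.ofNat Nat.Partrec.Code i) i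
        = some (p.2.getD i 0))))
    (Primrec.list_range.comp (Primrec.list_length.comp Primrec.snd)) hp.to₂
  exact Primrec.to₂ (hmain.of_eq fun p => rfl)

lemma stageCons_of_consistent {σ : List ℕ} (hσ : Consistent σ) (s : ℕ) :
    stageCons s σ = true := by
  rw [stageCons, List.all_eq_true]
  intro i hi
  rw [List.mem_range] at hi
  simp only [Bool.not_eq_true', decide_eq_false_iff_not]
  intro heq
  have : σ.getD i 0 ∈ (Denumerable.ofNat Nat.Partrec.Code i).eval i :=
    Nat.Partrec.Code.evaln_sound (Option.mem_def.2 heq)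
  exact hσ.2 i hi _ this rfl

lemma stageCons_antitone {σ : List ℕ} {s s' : ℕ} (h : s ≤ s')
    (h' : stageCons s' σ = true) : stageCons s σ = true := by
  rw [stageCons, List.all_eq_true] at h' ⊢
  intro i hi
  have := h' i hi
  simp only [Bool.not_eq_true', decide_eq_false_iff_not] at this ⊢
  intro heq
  exact this (Nat.Partrec.Code.evaln_mono h heq)

lemma list_uniform {α : Type*} {L : List α} {P : ℕ → α → Prop}
    (mono : ∀ {s s' : ℕ} {a : α}, s ≤ s' → P s a → P s' a)
    (h : ∀ a ∈ L, ∃ s, P s a) : ∃ s, ∀ a ∈ L, P s a := by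
  induction L with
  | nil => exact ⟨0, by simp⟩
  | cons b t ih =>
    obtain ⟨s1, hs1⟩ := ih (fun a ha => h a (List.mem_cons_of_mem _ ha))
    obtain ⟨s2, hs2⟩ := h b List.mem_cons_self
    refine ⟨max s1 s2, fun a ha => ?_⟩
    rcases List.mem_cons.1 ha with rfl | ha
    · exact mono (le_max_right _ _) hs2
    · exact mono (le_max_left _ _) (hs1 a ha)

lemma exists_stage (l : ℕ) :
    ∃ s, ∀ σ ∈ allBin l, stageCons s σ = true → Consistent σ := by
  apply list_uniform (P := fun s σ => stageCons s σ = true → Consistent σ)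
  · intro s s' σ hss hP hcons
    exact hP (stageCons_antitone hss hcons)
  · intro σ hσ
    by_cases hc : Consistent σ
    · exact ⟨0, fun _ => hc⟩
    · have hle : ∀ x ∈ σ, x ≤ 1 := (mem_allBin.1 hσ).2
      rw [Consistent, not_and_or] at hc
      rcases hc with hc | hc
      · exact absurd hle hc
      · push_neg at hc
        obtain ⟨i, hi, y, hy, hxy⟩ := hc
        obtain ⟨s, hs⟩ := Nat.Partrec.Code.evaln_complete.1 hy
        refine ⟨s, fun hcons => ?_⟩
        rw [stageCons, List.all_eq_true] at hcons
        have := hcons i (List.mem_range.2 hi)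
        simp only [Bool.not_eq_true', decide_eq_false_iff_not] at this
        exact absurd (hxy ▸ hs) this

lemma pre_patch_self {σ : List ℕ} {g : ℕ → ℕ} : pre (patch σ g) σ.length = σ := by
  rw [pre_patch le_rfl]
  simp

lemma pre_patch_eq {σ : List ℕ} {g : ℕ → ℕ} {k : ℕ} (h : σ.length = k) :
    pre (patch σ g) k = σ := by
  subst h; exact pre_patch_self

lemma code_of_functional (Φ : TuringFunctional) :
    ∃ c : Nat.Partrec.Code,
      ∀ σ n, c.eval (Encodable.encode ((σ, n) : List ℕ × ℕ)) = Φ.app (σ, n) := by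
  have h1 : Partrec fun m : ℕ =>
      Φ.app ((Encodable.decode (α := List ℕ × ℕ) m).getD ([], 0)) :=
    Φ.partrec.comp (Computable.option_getD Computable.decode (Computable.const ([], 0)))
  obtain ⟨c, hc⟩ := Nat.Partrec.Code.exists_code.1 (Partrec.nat_iff.1 h1)
  refine ⟨c, fun σ n => ?_⟩
  rw [hc]
  simp [Encodable.encodek]

lemma consistent_pre_iff {g : ℕ → ℕ} {l : ℕ} :
    Consistent (pre g l) ↔
      ∀ i < l, g i ≤ 1 ∧ ∀ y ∈ (Denumerable.ofNat Nat.Partrec.Code i).eval i, g i ≠ y := by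
  constructor
  · intro h i hi
    refine ⟨?_, fun y hy => ?_⟩
    · exact h.1 (g i) (List.mem_map.2 ⟨i, List.mem_range.2 hi, rfl⟩)
    · have := h.2 i (by simpa using hi) y hy
      rwa [pre_getD hi] at this
  · intro h
    constructor
    · intro x hx
      obtain ⟨i, hi, rfl⟩ := List.mem_map.1 hx
      exact (h i (List.mem_range.1 hi)).1
    · intro i hi y hy
      rw [pre_length] at hi
      rw [pre_getD hi]
      exact (h i hi).2 y hy

lemma isClosed_consistent_pre (l : ℕ) : IsClosed {g : ℕ → ℕ | Consistent (pre g l)} := by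
  have : {g : ℕ → ℕ | Consistent (pre g l)} = ⋂ i : ℕ, (fun g : ℕ → ℕ => g i) ⁻¹'
      {m | i < l → m ≤ 1 ∧ ∀ y ∈ (Denumerable.ofNat Nat.Partrec.Code i).eval i, m ≠ y} := by
    ext g
    simp only [Set.mem_setOf_eq, Set.mem_iInter, Set.mem_preimage, consistent_pre_iff]
  rw [this]
  exact isClosed_iInter fun i => (isClosed_discrete _).preimage (continuous_apply i)

lemma isOpen_mem_app (Φ : TuringFunctional) (l n x : ℕ) :
    IsOpen {g : ℕ → ℕ | x ∈ Φ.app (pre g l, n)} := by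
  rw [isOpen_iff_forall_mem_open]
  intro g hg
  refine ⟨Cyl g l, fun h hh => ?_, isOpen_cyl g l, fun j _ => rfl⟩
  show x ∈ Φ.app (pre h l, n)
  rwa [pre_eq_of_cyl hh]

lemma mem_DNR2_of_consistent {g : ℕ → ℕ} (h : ∀ l, Consistent (pre g l)) : g ∈ DNR2 := by
  constructor
  · intro n
    exact (consistent_pre_iff.1 (h (n + 1)) n (Nat.lt_succ_self n)).1
  · intro e y hy
    exact (consistent_pre_iff.1 (h (e + 1)) e (Nat.lt_succ_self e)).2 y hy

/-- Effective compactness, level form: if `Φ` outputs `f` on all of `DNR2`, then for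
each `n` some level `l` decides the value `f n` on all consistent strings. -/
lemma uniform_level {Φ : TuringFunctional} {f : ℕ → ℕ} (hΦ : ∀ g ∈ DNR2, Φ.Total g f)
    (n : ℕ) : ∃ l, ∀ σ, Consistent σ → σ.length = l → f n ∈ Φ.app (σ, n) := by
  by_contra hcon
  push_neg at hcon
  choose σs hσ1 hσ2 hσ3 using hcon
  set C : ℕ → Set (ℕ → ℕ) := fun l =>
    {g | (∀ j, g j ≤ 1) ∧ Consistent (pre g l) ∧ f n ∉ Φ.app (pre g l, n)} with hC
  have hdec : ∀ l, C (l + 1) ⊆ C l := by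
    intro l g hgC
    refine ⟨hgC.1, consistent_of_prefix (by simpa using pre_prefix g (Nat.le_succ l)) hgC.2.1, ?_⟩
    intro hmem
    exact hgC.2.2 (Φ.mono (by simpa using pre_prefix g (Nat.le_succ l)) hmem)
  have hne : ∀ l, (C l).Nonempty := by
    intro l
    have heq : pre (patch (σs l) dnr) l = σs l := pre_patch_eq (hσ2 l)
    exact ⟨patch (σs l) dnr, (patch_mem (hσ1 l) dnr_mem).1,
      by rw [heq]; exact hσ1 l, by rw [heq]; exact hσ3 l⟩
  have hclosed : ∀ l, IsClosed (C l) := by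
    intro l
    refine IsClosed.inter ?_ (IsClosed.inter (isClosed_consistent_pre l) ?_)
    · have heq : (⋂ j : ℕ, (fun g : ℕ → ℕ => g j) ⁻¹' Set.Iic 1)
          = {g : ℕ → ℕ | ∀ j, g j ≤ 1} := by
        ext g; simp
      have hcl : IsClosed {g : ℕ → ℕ | ∀ j, g j ≤ 1} := by
        rw [← heq]
        exact isClosed_iInter fun j => (isClosed_discrete _).preimage (continuous_apply j)
      exact hcl
    · exact (isOpen_mem_app Φ l n (f n)).isClosed_compl
  have hcpt : IsCompact (C 0) :=
    isCompact_K.of_isClosed_subset (hclosed 0) fun g hg => hg.1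
  obtain ⟨g, hg⟩ := IsCompact.nonempty_iInter_of_sequence_nonempty_isCompact_isClosed
    C hdec hne hcpt hclosed
  simp only [Set.mem_iInter] at hg
  have hgD : g ∈ DNR2 := mem_DNR2_of_consistent fun l => (hg l).2.1
  obtain ⟨k, hk⟩ := hΦ g hgD n
  exact (hg k).2.2 hk

/-- KEY: a function computed uniformly from all of DNR2 is computable. -/
lemma computable_of_uniform {Φ : TuringFunctional} {f : ℕ → ℕ}
    (hΦ : ∀ g ∈ DNR2, Φ.Total g f) : Computable f := by
  obtain ⟨c, hc⟩ := code_of_functional Φ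
  set chk : ℕ → ℕ → Bool := fun n m =>
    (allBin m.unpair.1.unpair.1).all fun σ =>
      !(stageCons m.unpair.1.unpair.2 σ) ||
        decide (Nat.Partrec.Code.evaln m.unpair.2.unpair.1 c
          (Encodable.encode ((σ, n) : List ℕ × ℕ)) = some m.unpair.2.unpair.2) with hchkdef
  have sound : ∀ n m, chk n m = true → m.unpair.2.unpair.2 = f n := by
    intro n m hm
    set l := m.unpair.1.unpair.1
    set s := m.unpair.1.unpair.2
    set t := m.unpair.2.unpair.1
    set y := m.unpair.2.unpair.2
    rw [hchkdef, List.all_eq_true] at hm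
    have hstar : pre dnr l ∈ allBin l :=
      mem_allBin.2 ⟨pre_length dnr l, (consistent_pre dnr_mem l).1⟩
    have h1 := hm _ hstar
    rw [stageCons_of_consistent (consistent_pre dnr_mem l) s] at h1
    simp only [Bool.not_true, Bool.false_or, decide_eq_true_eq] at h1
    have h2 : y ∈ Φ.app (pre dnr l, n) := by
      rw [← hc]
      exact Nat.Partrec.Code.evaln_sound (Option.mem_def.2 h1)
    obtain ⟨k, hk⟩ := hΦ dnr dnr_mem n
    exact val_unique Φ h2 hk
  have complete : ∀ n, ∃ m, chk n m = true ∧ m.unpair.2.unpair.2 = f n := by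
    intro n
    obtain ⟨l, hl⟩ := uniform_level hΦ n
    obtain ⟨s, hs⟩ := exists_stage l
    obtain ⟨t, ht⟩ := list_uniform
      (P := fun t σ => Consistent σ →
        Nat.Partrec.Code.evaln t c (Encodable.encode ((σ, n) : List ℕ × ℕ)) = some (f n))
      (fun {t t' σ} hts hP hcons => Nat.Partrec.Code.evaln_mono hts (hP hcons))
      (by
        intro σ hσ
        by_cases hcons : Consistent σ
        · have : f n ∈ Φ.app (σ, n) := hl σ hcons (mem_allBin.1 hσ).1
          rw [← hc] at this
          obtain ⟨t, ht⟩ := Nat.Partrec.Code.evaln_complete.1 this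
          exact ⟨t, fun _ => ht⟩
        · exact ⟨0, fun h => absurd h hcons⟩)
    refine ⟨Nat.pair (Nat.pair l s) (Nat.pair t (f n)), ?_, by simp⟩
    rw [hchkdef, List.all_eq_true]
    intro σ hσ
    simp only [Nat.unpair_pair] at hσ ⊢
    by_cases hsc : stageCons s σ = true
    · rw [hsc]
      have hcons : Consistent σ := hs σ hσ hsc
      simp only [Bool.not_true, Bool.false_or, decide_eq_true_eq]
      exact ht σ hσ hcons
    · rw [Bool.not_eq_true] at hsc
      rw [hsc]
      rfl
  have hchk : Computable₂ chk := by
    have hencode : Primrec (fun q : (ℕ × ℕ) × List ℕ =>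
        (Encodable.encode ((q.2, q.1.1) : List ℕ × ℕ))) :=
      Primrec.encode.comp (Primrec.pair Primrec.snd (Primrec.fst.comp Primrec.fst))
    have hev : Primrec (fun q : (ℕ × ℕ) × List ℕ =>
        Nat.Partrec.Code.evaln q.1.2.unpair.2.unpair.1 c
          (Encodable.encode ((q.2, q.1.1) : List ℕ × ℕ))) :=
      Nat.Partrec.Code.primrec_evaln.comp
        (Primrec.pair (Primrec.pair
          (Primrec.fst.comp (Primrec.unpair.comp
            (Primrec.snd.comp (Primrec.unpair.comp (Primrec.snd.comp Primrec.fst)))))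
          (Primrec.const c)) hencode)
    have hsome : Primrec (fun q : (ℕ × ℕ) × List ℕ =>
        (some q.1.2.unpair.2.unpair.2 : Option ℕ)) :=
      Primrec.option_some.comp (Primrec.snd.comp (Primrec.unpair.comp
        (Primrec.snd.comp (Primrec.unpair.comp (Primrec.snd.comp Primrec.fst)))))
    have hstage : Primrec (fun q : (ℕ × ℕ) × List ℕ =>
        stageCons q.1.2.unpair.1.unpair.2 q.2) :=
      primrec_stageCons.comp
        (Primrec.snd.comp (Primrec.unpair.comp
          (Primrec.fst.comp (Primrec.unpair.comp (Primrec.snd.comp Primrec.fst))))) Primrec.snd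
    have hinner : Primrec (fun q : (ℕ × ℕ) × List ℕ =>
        (!(stageCons q.1.2.unpair.1.unpair.2 q.2) ||
          decide (Nat.Partrec.Code.evaln q.1.2.unpair.2.unpair.1 c
            (Encodable.encode ((q.2, q.1.1) : List ℕ × ℕ)) = some q.1.2.unpair.2.unpair.2))) :=
      (Primrec.dom_bool₂ (· || ·)).comp (Primrec.not.comp hstage) (PrimrecPred.decide (Primrec.eq.comp hev hsome))
    have hmain : Primrec (fun p : ℕ × ℕ => chk p.1 p.2) := by
      have := primrec_all (α := ℕ × ℕ)
        (f := fun p => allBin p.2.unpair.1.unpair.1)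
        (p := fun p σ =>
          (!(stageCons p.2.unpair.1.unpair.2 σ) ||
            decide (Nat.Partrec.Code.evaln p.2.unpair.2.unpair.1 c
              (Encodable.encode ((σ, p.1) : List ℕ × ℕ)) = some p.2.unpair.2.unpair.2)))
        (primrec_allBin.comp (Primrec.fst.comp (Primrec.unpair.comp
          (Primrec.fst.comp (Primrec.unpair.comp Primrec.snd)))))
        hinner.to₂
      exact this
    exact hmain.to_comp.to₂
  set opt : ℕ → ℕ → Option ℕ :=
    fun n m => bif chk n m then some m.unpair.2.unpair.2 else none with hoptdef
  have hopt : Computable₂ opt := by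
    have h1 : Computable (fun p : ℕ × ℕ => bif chk p.1 p.2 then some p.2.unpair.2.unpair.2
        else none) :=
      Computable.cond (hchk.comp Computable.fst Computable.snd)
        (Computable.option_some.comp
          (Computable.snd.comp (Computable.unpair.comp
            (Computable.snd.comp (Computable.unpair.comp Computable.snd)))))
        (Computable.const none)
    exact h1.to₂
  have key : ∀ n, Nat.rfindOpt (opt n) = Part.some (f n) := by
    intro n
    have hdom : (Nat.rfindOpt (opt n)).Dom := by
      obtain ⟨m, hm1, hm2⟩ := complete n
      refine Nat.rfindOpt_dom.2 ⟨m, m.unpair.2.unpair.2, ?_⟩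
      show opt n m = some _
      rw [hoptdef]
      simp only [hm1, cond_true]
    apply Part.eq_some_iff.2
    obtain ⟨a, ha⟩ := Part.dom_iff_mem.1 hdom
    obtain ⟨m, hmem⟩ := Nat.rfindOpt_spec ha
    have hval : opt n m = some a := hmem
    cases hch : chk n m with
    | false =>
      simp only [hoptdef, hch, cond_false] at hval
      exact nomatch hval
    | true =>
      simp only [hoptdef, hch, cond_true, Option.some.injEq] at hval
      have haf : a = f n := by rw [← hval]; exact sound n m hch
      rwa [haf] at ha
  have hF : Partrec fun n => Nat.rfindOpt (opt n) := Partrec.rfindOpt hopt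
  show Partrec _
  exact hF.of_eq fun n => by rw [key n]; rfl


lemma cover_level {Φ : TuringFunctional} {A : Set ℕ}
    (hΦ : ∀ g ∈ DNR2, ∃ f, Φ.Total g f ∧ Set.range f = A) {x : ℕ} (hx : x ∈ A) :
    ∃ l N, ∀ σ, Consistent σ → σ.length = l → ∃ n < N, x ∈ Φ.app (σ, n) := by
  by_contra hcon
  push_neg at hcon
  have hcon' : ∀ m : ℕ, ∃ σ, Consistent σ ∧ σ.length = m ∧ ∀ n < m, x ∉ Φ.app (σ, n) := by
    intro m
    obtain ⟨σ, h1, h2, h3⟩ := hcon m m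
    exact ⟨σ, h1, h2, fun n hn hmem => (h3 n hn hmem).elim⟩
  choose σs hσ1 hσ2 hσ3 using hcon'
  set C : ℕ → Set (ℕ → ℕ) := fun m =>
    {g | (∀ j, g j ≤ 1) ∧ Consistent (pre g m) ∧ ∀ n < m, x ∉ Φ.app (pre g m, n)} with hC
  have hdec : ∀ m, C (m + 1) ⊆ C m := by
    intro m g hgC
    refine ⟨hgC.1, consistent_of_prefix (by simpa using pre_prefix g (Nat.le_succ m)) hgC.2.1,
      fun n hn hmem => ?_⟩
    exact hgC.2.2 n (Nat.lt_succ_of_lt hn)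
      (Φ.mono (by simpa using pre_prefix g (Nat.le_succ m)) hmem)
  have hne : ∀ m, (C m).Nonempty := by
    intro m
    have heq : pre (patch (σs m) dnr) m = σs m := pre_patch_eq (hσ2 m)
    exact ⟨patch (σs m) dnr, (patch_mem (hσ1 m) dnr_mem).1,
      by rw [heq]; exact hσ1 m, by rw [heq]; exact hσ3 m⟩
  have hclosed : ∀ m, IsClosed (C m) := by
    intro m
    refine IsClosed.inter ?_ (IsClosed.inter (isClosed_consistent_pre m) ?_)
    · have heq : (⋂ j : ℕ, (fun g : ℕ → ℕ => g j) ⁻¹' Set.Iic 1)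
          = {g : ℕ → ℕ | ∀ j, g j ≤ 1} := by
        ext g; simp
      have hcl : IsClosed {g : ℕ → ℕ | ∀ j, g j ≤ 1} := by
        rw [← heq]
        exact isClosed_iInter fun j => (isClosed_discrete _).preimage (continuous_apply j)
      exact hcl
    · have heq : (⋂ n : ℕ, ⋂ _ : n < m, {g : ℕ → ℕ | x ∈ Φ.app (pre g m, n)}ᶜ)
          = {g : ℕ → ℕ | ∀ n < m, x ∉ Φ.app (pre g m, n)} := by
        ext g; simp
      have hcl : IsClosed {g : ℕ → ℕ | ∀ n < m, x ∉ Φ.app (pre g m, n)} := by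
        rw [← heq]
        exact isClosed_iInter fun n => isClosed_iInter fun _ =>
          (isOpen_mem_app Φ m n x).isClosed_compl
      exact hcl
  have hcpt : IsCompact (C 0) :=
    isCompact_K.of_isClosed_subset (hclosed 0) fun g hg => hg.1
  obtain ⟨g, hg⟩ := IsCompact.nonempty_iInter_of_sequence_nonempty_isCompact_isClosed
    C hdec hne hcpt hclosed
  simp only [Set.mem_iInter] at hg
  have hgD : g ∈ DNR2 := mem_DNR2_of_consistent fun m => (hg m).2.1
  have hnever : ∀ n k, x ∉ Φ.app (pre g k, n) := by
    intro n k hmem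
    have h1 : x ∈ Φ.app (pre g (max k (n + 1)), n) :=
      Φ.mono (pre_prefix g (le_max_left _ _)) hmem
    exact (hg (max k (n + 1))).2.2 n (lt_of_lt_of_le (Nat.lt_succ_self n) (le_max_right _ _)) h1
  obtain ⟨f, hTf, hrange⟩ := hΦ g hgD
  obtain ⟨n0, hn0⟩ := hrange ▸ hx
  obtain ⟨k, hk⟩ := hTf n0
  rw [hn0] at hk
  exact hnever n0 k hk

lemma enum_computable {A : Set ℕ} (hA : A.Nonempty)
    (h : MedvedevLE (EProb A) DNR2) : ∃ g ∈ EProb A, Computable g := by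
  obtain ⟨Φ, hΦ⟩ := h
  have hΦ' : ∀ g ∈ DNR2, ∃ f, Φ.Total g f ∧ Set.range f = A := hΦ
  obtain ⟨c, hc⟩ := code_of_functional Φ
  set chk : ℕ → ℕ → Bool := fun x m =>
    (allBin m.unpair.1.unpair.1).all fun σ =>
      !(stageCons m.unpair.1.unpair.2 σ) ||
        (List.range m.unpair.2.unpair.1).any fun n =>
          decide (Nat.Partrec.Code.evaln m.unpair.2.unpair.2 c
            (Encodable.encode ((σ, n) : List ℕ × ℕ)) = some x) with hchkdef
  have sound : ∀ x m, chk x m = true → x ∈ A := by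
    intro x m hm
    rw [hchkdef, List.all_eq_true] at hm
    set l := m.unpair.1.unpair.1
    have hstar : pre dnr l ∈ allBin l :=
      mem_allBin.2 ⟨pre_length dnr l, (consistent_pre dnr_mem l).1⟩
    have h1 := hm _ hstar
    rw [stageCons_of_consistent (consistent_pre dnr_mem l) _] at h1
    simp only [Bool.not_true, Bool.false_or, List.any_eq_true, List.mem_range,
      decide_eq_true_eq] at h1
    obtain ⟨n, _, heq⟩ := h1
    have h2 : x ∈ Φ.app (pre dnr l, n) := by
      rw [← hc]
      exact Nat.Partrec.Code.evaln_sound (Option.mem_def.2 heq)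
    obtain ⟨f0, hT0, hr0⟩ := hΦ' dnr dnr_mem
    obtain ⟨k, hk⟩ := hT0 n
    have : x = f0 n := val_unique Φ h2 hk
    rw [this, ← hr0]
    exact ⟨n, rfl⟩
  have complete : ∀ x ∈ A, ∃ m, chk x m = true := by
    intro x hx
    obtain ⟨l, N, hlN⟩ := cover_level hΦ' hx
    obtain ⟨s, hs⟩ := exists_stage l
    obtain ⟨t, ht⟩ := list_uniform
      (P := fun t σ => Consistent σ → ∃ n < N,
        Nat.Partrec.Code.evaln t c (Encodable.encode ((σ, n) : List ℕ × ℕ)) = some x)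
      (fun {t t' σ} hts hP hcons => by
        obtain ⟨n, hn, heq⟩ := hP hcons
        exact ⟨n, hn, Nat.Partrec.Code.evaln_mono hts heq⟩)
      (by
        intro σ hσ
        by_cases hcons : Consistent σ
        · obtain ⟨n, hn, hmem⟩ := hlN σ hcons (mem_allBin.1 hσ).1
          rw [← hc] at hmem
          obtain ⟨t, htt⟩ := Nat.Partrec.Code.evaln_complete.1 hmem
          exact ⟨t, fun _ => ⟨n, hn, htt⟩⟩
        · exact ⟨0, fun h => absurd h hcons⟩)
    refine ⟨Nat.pair (Nat.pair l s) (Nat.pair N t), ?_⟩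
    rw [hchkdef, List.all_eq_true]
    intro σ hσ
    simp only [Nat.unpair_pair] at hσ ⊢
    by_cases hsc : stageCons s σ = true
    · rw [hsc]
      have hcons : Consistent σ := hs σ hσ hsc
      simp only [Bool.not_true, Bool.false_or, List.any_eq_true, List.mem_range,
        decide_eq_true_eq]
      exact ht σ hσ hcons
    · rw [Bool.not_eq_true] at hsc
      rw [hsc]
      rfl
  have hchk : Computable₂ chk := by
    have hmproj : Primrec (fun q : (ℕ × ℕ) × List ℕ => q.1.2) :=
      Primrec.snd.comp Primrec.fst
    have hinner2 : Primrec (fun q : ((ℕ × ℕ) × List ℕ) × ℕ =>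
        decide (Nat.Partrec.Code.evaln q.1.1.2.unpair.2.unpair.2 c
          (Encodable.encode ((q.1.2, q.2) : List ℕ × ℕ)) = some q.1.1.1)) := by
      have hm : Primrec (fun q : ((ℕ × ℕ) × List ℕ) × ℕ => q.1.1.2) :=
        Primrec.snd.comp (Primrec.fst.comp Primrec.fst)
      have ht' : Primrec (fun q : ((ℕ × ℕ) × List ℕ) × ℕ => q.1.1.2.unpair.2.unpair.2) :=
        Primrec.snd.comp (Primrec.unpair.comp (Primrec.snd.comp (Primrec.unpair.comp hm)))
      have hx' : Primrec (fun q : ((ℕ × ℕ) × List ℕ) × ℕ => (some q.1.1.1 : Option ℕ)) :=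
        Primrec.option_some.comp (Primrec.fst.comp (Primrec.fst.comp Primrec.fst))
      have henc : Primrec (fun q : ((ℕ × ℕ) × List ℕ) × ℕ =>
          Encodable.encode ((q.1.2, q.2) : List ℕ × ℕ)) :=
        Primrec.encode.comp (Primrec.pair (Primrec.snd.comp Primrec.fst) Primrec.snd)
      exact PrimrecPred.decide (Primrec.eq.comp
        (Nat.Partrec.Code.primrec_evaln.comp
          (Primrec.pair (Primrec.pair ht' (Primrec.const c)) henc)) hx')
    have hany : Primrec (fun q : (ℕ × ℕ) × List ℕ =>
        (List.range q.1.2.unpair.2.unpair.1).any fun n =>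
          decide (Nat.Partrec.Code.evaln q.1.2.unpair.2.unpair.2 c
            (Encodable.encode ((q.2, n) : List ℕ × ℕ)) = some q.1.1)) :=
      primrec_any (α := (ℕ × ℕ) × List ℕ)
        (f := fun q => List.range q.1.2.unpair.2.unpair.1)
        (Primrec.list_range.comp (Primrec.fst.comp (Primrec.unpair.comp
          (Primrec.snd.comp (Primrec.unpair.comp hmproj))))) hinner2.to₂
    have hstage : Primrec (fun q : (ℕ × ℕ) × List ℕ =>
        stageCons q.1.2.unpair.1.unpair.2 q.2) :=
      primrec_stageCons.comp
        (Primrec.snd.comp (Primrec.unpair.comp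
          (Primrec.fst.comp (Primrec.unpair.comp hmproj)))) Primrec.snd
    have hinner : Primrec (fun q : (ℕ × ℕ) × List ℕ =>
        (!(stageCons q.1.2.unpair.1.unpair.2 q.2) ||
          (List.range q.1.2.unpair.2.unpair.1).any fun n =>
            decide (Nat.Partrec.Code.evaln q.1.2.unpair.2.unpair.2 c
              (Encodable.encode ((q.2, n) : List ℕ × ℕ)) = some q.1.1))) :=
      (Primrec.dom_bool₂ (· || ·)).comp (Primrec.not.comp hstage) hany
    have hmain : Primrec (fun p : ℕ × ℕ => chk p.1 p.2) :=
      primrec_all (α := ℕ × ℕ)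
        (f := fun p => allBin p.2.unpair.1.unpair.1)
        (p := fun p σ =>
          (!(stageCons p.2.unpair.1.unpair.2 σ) ||
            (List.range p.2.unpair.2.unpair.1).any fun n =>
              decide (Nat.Partrec.Code.evaln p.2.unpair.2.unpair.2 c
                (Encodable.encode ((σ, n) : List ℕ × ℕ)) = some p.1)))
        (primrec_allBin.comp (Primrec.fst.comp (Primrec.unpair.comp
          (Primrec.fst.comp (Primrec.unpair.comp Primrec.snd)))))
        hinner.to₂
    exact hmain.to_comp.to₂
  obtain ⟨a0, ha0⟩ := hA
  set g : ℕ → ℕ := fun m => bif chk m.unpair.1 m.unpair.2 then m.unpair.1 else a0 with hgdef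
  have hgc : Computable g := by
    apply Computable.cond
      (hchk.comp (Computable.fst.comp Computable.unpair) (Computable.snd.comp Computable.unpair))
      (Computable.fst.comp Computable.unpair) (Computable.const a0)
  have hgr : Set.range g = A := by
    apply Set.eq_of_subset_of_subset
    · rintro y ⟨m, rfl⟩
      rw [hgdef]
      cases hch : chk m.unpair.1 m.unpair.2 with
      | false => simpa [hch] using ha0
      | true => simpa [hch] using sound _ _ hch
    · intro x hx
      obtain ⟨m, hm⟩ := complete x hx
      refine ⟨Nat.pair x m, ?_⟩
      rw [hgdef]
      simp only [Nat.unpair_pair, hm, cond_true]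
  exact ⟨g, hgr, hgc⟩

lemma consFun_zero (i : ℕ) (f : ℕ → ℕ) : consFun i f 0 = i := rfl

lemma consFun_succ (i : ℕ) (f : ℕ → ℕ) (n : ℕ) : consFun i f (n + 1) = f n := rfl

lemma side_reduce {Φ : TuringFunctional} {S0 S1 : Set (ℕ → ℕ)}
    (hΦ : ∀ g ∈ DNR2, ∃ f, Φ.Total g f ∧ f ∈ meetProb S0 S1)
    {k0 v : ℕ} (hv : v ∈ Φ.app (pre dnr k0, 0)) :
    (v = 0 → MedvedevLE S0 DNR2) ∧ (v = 1 → MedvedevLE S1 DNR2) := by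
  have main : ∀ g ∈ DNR2, ∃ f1, Φ.Total (patch (pre dnr k0) g) f1 ∧ f1 ∈ meetProb S0 S1 ∧
      f1 0 = v := by
    intro g hg
    have hpg := patch_mem (consistent_pre dnr_mem k0) hg
    obtain ⟨f1, hT1, hf1⟩ := hΦ _ hpg
    obtain ⟨k1, hk1⟩ := hT1 0
    have hσ : pre (patch (pre dnr k0) g) k0 = pre dnr k0 := pre_patch_eq (pre_length dnr k0)
    have hv' : v ∈ Φ.app (pre (patch (pre dnr k0) g) k0, 0) := by rw [hσ]; exact hv
    exact ⟨f1, hT1, hf1, val_unique Φ hk1 hv'⟩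
  constructor
  · intro hv0
    refine ⟨Φ.patchShift (pre dnr k0) Computable.succ, fun g hg => ?_⟩
    obtain ⟨f1, hT1, hf1, h10⟩ := main g hg
    rcases hf1 with ⟨b1, hb1, hfb1⟩ | ⟨c1, hc1, hfc1⟩
    · refine ⟨fun n => f1 (Nat.succ n), patchShift_total _ Computable.succ hT1, ?_⟩
      have hbe : (fun n => f1 (Nat.succ n)) = b1 := funext fun n => by rw [← hfb1]; rfl
      rw [hbe]; exact hb1
    · exfalso
      have : f1 0 = 1 := by rw [← hfc1]; rfl
      omega
  · intro hv1
    refine ⟨Φ.patchShift (pre dnr k0) Computable.succ, fun g hg => ?_⟩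
    obtain ⟨f1, hT1, hf1, h10⟩ := main g hg
    rcases hf1 with ⟨b1, hb1, hfb1⟩ | ⟨c1, hc1, hfc1⟩
    · exfalso
      have : f1 0 = 0 := by rw [← hfb1]; rfl
      omega
    · refine ⟨fun n => f1 (Nat.succ n), patchShift_total _ Computable.succ hT1, ?_⟩
      have hce : (fun n => f1 (Nat.succ n)) = c1 := funext fun n => by rw [← hfc1]; rfl
      rw [hce]; exact hc1

theorem meetIrred_DNR2 : MeetIrred DNR2 := by
  rintro ⟨B, C, ⟨hMD, _hDM⟩, ⟨_hDB, hBD⟩, ⟨_hDC, hCD⟩⟩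
  obtain ⟨Φ, hΦ⟩ := hMD
  obtain ⟨f0, hT0, hf0⟩ := hΦ dnr dnr_mem
  obtain ⟨k0, hk0⟩ := hT0 0
  have hside := side_reduce hΦ hk0
  rcases hf0 with ⟨b, _hb, hfb⟩ | ⟨c, _hc, hfc⟩
  · exact hBD (hside.1 (by rw [← hfb]; rfl))
  · exact hCD (hside.2 (by rw [← hfc]; rfl))
theorem not_countable_DNR2 : ¬ ∃ B : Set (ℕ → ℕ), B.Countable ∧ MedvedevEquiv B DNR2 := by
  rintro ⟨B, hBc, hBD2, hD2B⟩
  obtain ⟨Φ, hΦ⟩ := hBD2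
  obtain ⟨fB, _hTB, hfB⟩ := hΦ dnr dnr_mem
  obtain ⟨e, hB⟩ := hBc.exists_eq_range ⟨fB, hfB⟩
  haveI : CompactSpace ↥DNR2 := isCompact_iff_compactSpace.1 isCompact_DNR2
  haveI : Nonempty ↥DNR2 := ⟨⟨dnr, dnr_mem⟩⟩
  set D : ℕ → Set ↥DNR2 := fun i => {x | Φ.Total x.val (e i)} with hD
  have hDclosed : ∀ i, IsClosed (D i) := by
    intro i
    rw [← isOpen_compl_iff, isOpen_iff_forall_mem_open]
    intro x hx
    obtain ⟨f, hTf, _hfB2⟩ := hΦ x.val x.2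
    have hx' : ¬ Φ.Total x.val (e i) := hx
    rw [TuringFunctional.Total] at hx'
    push_neg at hx'
    obtain ⟨n, hn⟩ := hx'
    obtain ⟨k0, hk0⟩ := hTf n
    refine ⟨Subtype.val ⁻¹' Cyl x.val k0, ?_,
      (isOpen_cyl _ _).preimage continuous_subtype_val, fun j _ => rfl⟩
    intro y hy
    show ¬ Φ.Total y.val (e i)
    intro hTy
    obtain ⟨k1, hk1⟩ := hTy n
    have hpre : pre y.val k0 = pre x.val k0 := pre_eq_of_cyl hy
    have hfn : f n ∈ Φ.app (pre y.val k0, n) := by rw [hpre]; exact hk0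
    have heif : e i n = f n := val_unique Φ hk1 hfn
    exact hn k0 (heif ▸ hk0)
  have hDcover : ⋃ i, D i = Set.univ := by
    ext x
    simp only [Set.mem_iUnion, Set.mem_univ, iff_true]
    obtain ⟨f, hTf, hfmem⟩ := hΦ x.val x.2
    rw [hB] at hfmem
    obtain ⟨i, rfl⟩ := hfmem
    exact ⟨i, hTf⟩
  obtain ⟨i, x, hx⟩ := nonempty_interior_of_iUnion_of_closed hDclosed hDcover
  obtain ⟨U, hUopen, hUeq⟩ := isOpen_induced_iff.1 (isOpen_interior (s := D i))
  have hxU : x.val ∈ U := by rw [← hUeq] at hx; exact hx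
  obtain ⟨I, u, hIu, hsub⟩ := isOpen_pi_iff.1 hUopen x.val hxU
  set k := (I.sup id) + 1 with hkdef
  have hIk : ∀ a ∈ I, a < k := fun a ha => Nat.lt_succ_of_le (Finset.le_sup (f := id) ha)
  have hcylsub : ∀ g (hg : g ∈ DNR2), (∀ j < k, g j = x.val j) → Φ.Total g (e i) := by
    intro g hg hcyl
    have hgU : g ∈ U := by
      apply hsub
      intro a ha
      rw [Finset.mem_coe] at ha
      have : g a = x.val a := hcyl a (hIk a ha)
      rw [this]
      exact (hIu a ha).2
    have hmem : (⟨g, hg⟩ : ↥DNR2) ∈ interior (D i) := by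
      rw [← hUeq]; exact hgU
    exact interior_subset hmem
  set σ := pre x.val k with hσdef
  have hunif : ∀ g ∈ DNR2, (Φ.patchShift σ Computable.id).Total g (fun n => e i (id n)) := by
    intro g hg
    have hpatch : patch σ g ∈ DNR2 := patch_mem (consistent_pre x.2 k) hg
    exact patchShift_total σ Computable.id
      (hcylsub _ hpatch (fun j hj => patch_mem_cyl rfl j hj))
  have hcomp : Computable (e i) := by
    have h1 : Computable (fun n => e i (id n)) := computable_of_uniform hunif
    exact h1
  obtain ⟨Ψ, hΨ⟩ := hD2B
  have hei : e i ∈ B := by rw [hB]; exact ⟨i, rfl⟩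
  obtain ⟨d, hTd, hdmem⟩ := hΨ (e i) hei
  exact no_computable_DNR2 (computable_of_total hcomp hTd) hdmem

theorem not_enum_DNR2 : ¬ ∃ A : Set ℕ, A.Nonempty ∧ MedvedevEquiv (EProb A) DNR2 := by
  rintro ⟨A, hA, hED, hDE⟩
  obtain ⟨g, hg, hgc⟩ := enum_computable hA hED
  obtain ⟨Ψ, hΨ⟩ := hDE
  obtain ⟨d, hTd, hdmem⟩ := hΨ g hg
  exact no_computable_DNR2 (computable_of_total hgc hTd) hdmem

end S5

/-- The Medvedev degree of `DNR₂` is closed, meet-irreducible, and uncountable,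
yet not a degree of enumerability; in fact it does not bound any nonzero degree
of enumerability. -/


theorem stmt5 :
    (∃ C : Set (ℕ → ℕ), IsClosed C ∧ MedvedevEquiv C DNR2) ∧
      MeetIrred DNR2 ∧
      (¬ ∃ B : Set (ℕ → ℕ), B.Countable ∧ MedvedevEquiv B DNR2) ∧
      (¬ ∃ A : Set ℕ, A.Nonempty ∧ MedvedevEquiv (EProb A) DNR2) ∧
      (∀ A : Set ℕ, A.Nonempty → MedvedevLE (EProb A) DNR2 →
        ∃ g ∈ EProb A, Computable g) := by
  refine ⟨⟨DNR2, S5.isClosed_DNR2, S5.medvedevLE_refl _, S5.medvedevLE_refl _⟩,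
    S5.meetIrred_DNR2, S5.not_countable_DNR2, S5.not_enum_DNR2,
    fun A hA h => S5.enum_computable hA h⟩
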